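/- Let G be a group and F : G → ℝ an antisymmetric quasimorphism with defect at most D, i.e. F(g⁻¹) = −F(g) for all g ∈ G and |F(gh) − F(g) − F(h)| ≤ D for all g, h ∈ G. If an element g ∈ G can be written as a product of C commutators, g = [a₁,b₁][a₂,b₂]⋯[a_C,b_C], then |F(g)| ≤ 4C·D. -/

import Mathlib

open scoped commutatorElement

/-- If `g` is a product of `C` commutators, then an antisymmetric quasimorphism with
defect at most `D` satisfies `|F g| ≤ 4 * C * D`. -/
theorem antisymmetric_quasimorphism_bound_on_product_of_commutators
    {G : Type*} [Group G] (F : G → ℝ) (D : ℝ)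
    (hanti : ∀ g : G, F g⁻¹ = -F g)
    (hquasi : ∀ g h : G, |F (g * h) - F g - F h| ≤ D)
    (C : ℕ) (g : G) (a b : ℕ → G)
    (hg : g = ((List.range C).map (fun i => ⁅a i, b i⁆)).prod) :
    |F g| ≤ 4 * C * D := by
  have hF1 : F 1 = 0 := by
    have h := hanti 1
    rw [inv_one] at h
    linarith
  have hD : 0 ≤ D := by
    calc (0:ℝ) ≤ |F (1 * 1) - F 1 - F 1| := abs_nonneg _
      _ ≤ D := hquasi 1 1
  have hcomm : ∀ x y : G, |F ⁅x, y⁆| ≤ 3 * D := by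
    intro x y
    have h1 := hquasi (x * y) (x⁻¹ * y⁻¹)
    have h2 := hquasi x y
    have h3 := hquasi x⁻¹ y⁻¹
    rw [hanti, hanti] at h3
    have heq : ⁅x, y⁆ = (x * y) * (x⁻¹ * y⁻¹) := by group
    rw [heq]
    rw [abs_le] at h1 h2 h3 ⊢
    constructor <;> [linarith [h1.1, h2.2, h3.2]; linarith [h1.2, h2.1, h3.1]]
  subst hg
  induction C with
  | zero => simp [hF1]
  | succ n ih =>
    rw [List.range_succ, List.map_append, List.prod_append]
    simp only [List.map_cons, List.map_nil, List.prod_cons, List.prod_nil, mul_one]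
    set P := ((List.range n).map (fun i => ⁅a i, b i⁆)).prod with hP
    have h4 := hquasi P ⁅a n, b n⁆
    have h5 := hcomm (a n) (b n)
    push_cast
    rw [abs_le] at h4 h5 ⊢
    rw [abs_le] at ih
    constructor <;> [linarith [ih.1]; linarith [ih.2]]
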